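/- Let α = (√5 - 1)/2 and let β be the unique real number in (0,1) with 1 - β - β² + β³ - β⁴ = 0. Let n ≥ 0 be a natural number and suppose α^(2^(-n)) < q < β^(2^(-n)). Then the greedy shooting sequence satisfies a_q(N) = t_N for all 0 ≤ N < 5·2^n, and a_q(5·2^n) ≠ t_{5·2^n}. -/
import Mathlib


/-- The Thue-Morse sequence: `tm n = (-1)^(s₂ n)` where `s₂ n` is the sum of the
binary digits of `n`. -/
def tm (n : ℕ) : ℤ := (-1) ^ (Nat.digits 2 n).sum

/-- The partial sums `S q n = ∑_{0 ≤ j < n} tm j * q^j`. -/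
noncomputable def S (q : ℝ) (n : ℕ) : ℝ := ∑ j ∈ Finset.range n, (tm j : ℝ) * q ^ j

/-- The greedy shooting sequence: `a q N = 1` if `∑_{0 ≤ j < N} a q j * q^j ≤ 0`,
and `a q N = -1` otherwise. -/
noncomputable def a (q : ℝ) : ℕ → ℤ
  | N => if (∑ j : Fin N, (a q j : ℝ) * q ^ (j : ℕ)) ≤ 0 then 1 else -1
decreasing_by all_goals exact j.isLt

lemma tm_even (n : ℕ) : tm (2 * n) = tm n := by
  rcases Nat.eq_zero_or_pos n with h | h
  · simp [h]
  · unfold tm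
    rw [Nat.digits_def' (by norm_num : 1 < 2) (by omega)]
    simp [Nat.mul_div_cancel_left _ (by norm_num : 0 < 2), Nat.mul_mod_right]

lemma tm_odd (n : ℕ) : tm (2 * n + 1) = - tm n := by
  unfold tm
  rw [Nat.digits_def' (by norm_num : 1 < 2) (by omega)]
  have h1 : (2 * n + 1) % 2 = 1 := by omega
  have h2 : (2 * n + 1) / 2 = n := by omega
  rw [h1, h2]
  simp [pow_add, pow_succ]

lemma tm_cases (n : ℕ) : tm n = 1 ∨ tm n = -1 := by
  unfold tm
  rcases Nat.even_or_odd (Nat.digits 2 n).sum with h | h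
  · left; exact h.neg_one_pow
  · right; exact h.neg_one_pow

lemma S_succ (q : ℝ) (N : ℕ) : S q (N + 1) = S q N + (tm N : ℝ) * q ^ N :=
  Finset.sum_range_succ _ _

lemma S_even (q : ℝ) (N : ℕ) : S q (2 * N) = (1 - q) * S (q ^ 2) N := by
  induction N with
  | zero => simp [S]
  | succ N ih =>
    have h : 2 * (N + 1) = (2 * N + 1) + 1 := by ring
    rw [h, S_succ, S_succ, ih, S_succ, tm_even, tm_odd]
    have e1 : q ^ (2 * N) = (q ^ 2) ^ N := by rw [← pow_mul]
    have e2 : q ^ (2 * N + 1) = (q ^ 2) ^ N * q := by rw [← pow_mul, pow_succ]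
    push_cast
    rw [e1, e2]
    ring

lemma S_odd (q : ℝ) (N : ℕ) :
    S q (2 * N + 1) = (1 - q) * S (q ^ 2) N + (tm N : ℝ) * q ^ (2 * N) := by
  rw [S_succ, S_even, tm_even]

theorem a_unfold (q : ℝ) (N : ℕ) :
    a q N = if (∑ j : Fin N, (a q j : ℝ) * q ^ (j : ℕ)) ≤ 0 then 1 else -1 := by
  rw [a]

lemma a_eq_ite (q : ℝ) (N : ℕ) (h : ∀ j < N, a q j = tm j) :
    a q N = if S q N ≤ 0 then 1 else -1 := by
  rw [a_unfold]
  have : (∑ j : Fin N, (a q j : ℝ) * q ^ (j : ℕ)) = S q N := by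
    rw [Fin.sum_univ_eq_sum_range (fun j => (a q j : ℝ) * q ^ j)]
    exact Finset.sum_congr rfl fun j hj => by rw [h j (Finset.mem_range.mp hj)]
  rw [this]

lemma a_agree (q : ℝ) (M : ℕ) (hgood : ∀ N < M, tm N = if S q N ≤ 0 then 1 else -1) :
    ∀ N < M, a q N = tm N := by
  intro N
  induction N using Nat.strong_induction_on with
  | _ N ih =>
    intro hN
    rw [a_eq_ite q N (fun j hj => ih j hj (hj.trans hN)), hgood N hN]

lemma tm_five_pow (n : ℕ) : tm (5 * 2 ^ n) = 1 := by
  induction n with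
  | zero => simp [tm, Nat.digits_def']
  | succ n ih =>
    have : 5 * 2 ^ (n + 1) = 2 * (5 * 2 ^ n) := by ring
    rw [this, tm_even, ih]

lemma tmv : tm 0 = 1 ∧ tm 1 = -1 ∧ tm 2 = -1 ∧ tm 3 = 1 ∧ tm 4 = -1 := by
  refine ⟨?_, ?_, ?_, ?_, ?_⟩ <;> simp [tm, Nat.digits_def']

lemma sqrt5_lemmas : Real.sqrt 5 ^ 2 = 5 ∧ 222/100 < Real.sqrt 5 ∧ Real.sqrt 5 < 224/100 := by
  have h5 : Real.sqrt 5 ^ 2 = 5 := Real.sq_sqrt (by norm_num)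
  have h0 : 0 ≤ Real.sqrt 5 := Real.sqrt_nonneg 5
  refine ⟨h5, by nlinarith, by nlinarith⟩

set_option maxHeartbeats 4000000 in
lemma grand (β : ℝ) (hβ0 : 0 < β) (hβ1 : β < 1)
    (hβ : 1 - β - β ^ 2 + β ^ 3 - β ^ 4 = 0) :
    ∀ n : ℕ, ∀ q : ℝ, 0 < q → q < 1 →
      (Real.sqrt 5 - 1) / 2 < q ^ (2 ^ n) → q ^ (2 ^ n) < β →
      (∀ N < 5 * 2 ^ n, tm N = if S q N ≤ 0 then 1 else -1) ∧
      (∀ N < 5 * 2 ^ n, -(q ^ N) < (1 - q) * S q N ∧ (1 - q) * S q N < q ^ N) ∧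
      0 < S q (5 * 2 ^ n) := by
  obtain ⟨h5, h5a, h5b⟩ := sqrt5_lemmas
  intro n
  induction n with
  | zero =>
    intro q hq0 hq1 hα hb
    rw [pow_zero, pow_one] at hα hb
    have hq61 : 61/100 < q := by nlinarith
    have hqq : 1 < q + q ^ 2 := by
      nlinarith [mul_pos (sub_pos.2 hα) (show 0 < q + (Real.sqrt 5 + 1)/2 by nlinarith)]
    have hS0 : S q 0 = 0 := by simp [S]
    have hS1 : S q 1 = 1 := by rw [S_succ, hS0, tmv.1]; push_cast; ring
    have hS2 : S q 2 = 1 - q := by rw [S_succ, hS1, tmv.2.1]; push_cast; ring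
    have hS3 : S q 3 = 1 - q - q ^ 2 := by rw [S_succ, hS2, tmv.2.2.1]; push_cast; ring
    have hS4 : S q 4 = 1 - q - q ^ 2 + q ^ 3 := by
      rw [S_succ, hS3, tmv.2.2.2.1]; push_cast; ring
    have hS5 : S q 5 = 1 - q - q ^ 2 + q ^ 3 - q ^ 4 := by
      rw [S_succ, hS4, tmv.2.2.2.2]; push_cast; ring
    refine ⟨?_, ?_, ?_⟩
    · intro N hN
      interval_cases N
      · rw [hS0, if_pos le_rfl]; exact tmv.1
      · rw [hS1, if_neg (by norm_num)]; exact tmv.2.1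
      · rw [hS2, if_neg (by push_neg; linarith)]; exact tmv.2.2.1
      · rw [hS3, if_pos (by nlinarith)]; exact tmv.2.2.2.1
      · have h4 : ¬ S q 4 ≤ 0 := by
          push_neg
          rw [hS4]
          nlinarith [mul_pos (show (0:ℝ) < 1 - q by linarith)
            (show (0:ℝ) < 1 - q ^ 2 by nlinarith)]
        rw [if_neg h4]
        exact tmv.2.2.2.2
    · intro N hN
      interval_cases N
      · rw [hS0]; norm_num
      · rw [hS1]; constructor <;> nlinarith
      · rw [hS2]; constructor <;> nlinarith
      · rw [hS3]; constructor <;>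
          nlinarith [mul_nonneg (sq_nonneg (q - 61/100)) (show (0:ℝ) ≤ q + 122/100 by linarith)]
      · rw [hS4]
        have ha1 : 3721/10000 < q ^ 2 := by nlinarith
        have ha3 : (1 - q) ^ 2 < 1521/10000 := by nlinarith
        have ha2 : 13845841/100000000 < q ^ 4 := by nlinarith
        constructor
        · nlinarith [mul_nonneg (mul_nonneg (sub_nonneg.2 hq1.le) (sub_nonneg.2 hq1.le))
            (show (0:ℝ) ≤ 1 - q ^ 2 by nlinarith), pow_pos hq0 4]
        · nlinarith [mul_pos (show (0:ℝ) < 1521/10000 - (1-q)^2 by nlinarith)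
            (show (0:ℝ) < 1 - q ^ 2 by nlinarith)]
    · show 0 < S q (5 * 1)
      rw [mul_one, hS5]
      have hbr : 0 < 1 + β + q - β^2 - β*q - q^2 + β^3 + β^2*q + β*q^2 + q^3 := by
        nlinarith [mul_nonneg hβ0.le (sub_nonneg.2 hβ1.le), mul_nonneg hq0.le (sub_nonneg.2 hβ1.le),
          pow_pos hβ0 3, mul_nonneg (mul_nonneg hβ0.le hβ0.le) hq0.le,
          mul_nonneg hβ0.le (mul_nonneg hq0.le hq0.le), pow_pos hq0 3]
      nlinarith [mul_pos (sub_pos.2 hb) hbr]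
  | succ n ih =>
    intro q hq0 hq1 hα hb
    have hre : (q ^ 2) ^ 2 ^ n = q ^ 2 ^ (n + 1) := by
      rw [← pow_mul]; congr 1; ring
    have hr0 : 0 < q ^ 2 := by positivity
    have hr1 : q ^ 2 < 1 := by nlinarith
    obtain ⟨ihg, ihi, ihp⟩ := ih (q ^ 2) hr0 hr1 (by rw [hre]; exact hα) (by rw [hre]; exact hb)
    have hαq : (Real.sqrt 5 - 1) / 2 < q :=
      lt_of_lt_of_le hα (pow_le_of_le_one hq0.le hq1.le (by positivity))
    have hq61 : 61/100 < q := by nlinarith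
    have hqq : 1 < q + q ^ 2 := by
      nlinarith [mul_pos (sub_pos.2 hαq) (show 0 < q + (Real.sqrt 5 + 1)/2 by nlinarith)]
    have h2n : (5 * 2 ^ (n+1) : ℕ) = 2 * (5 * 2 ^ n) := by ring
    have hpowM : ∀ M : ℕ, (q ^ 2) ^ M = q ^ (2 * M) := fun M => by rw [← pow_mul]
    have hsign : ∀ M < 5 * 2 ^ n,
        (tm M = 1 ∧ S (q ^ 2) M ≤ 0) ∨ (tm M = -1 ∧ 0 < S (q ^ 2) M) := by
      intro M hM
      have hg := ihg M hM
      rcases tm_cases M with h | h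
      · refine Or.inl ⟨h, ?_⟩
        by_contra hs
        rw [h, if_neg hs] at hg; norm_num at hg
      · refine Or.inr ⟨h, ?_⟩
        by_contra hs
        push_neg at hs
        rw [h, if_pos hs] at hg; norm_num at hg
    have h1qpos : (0:ℝ) < 1 - q := by linarith
    refine ⟨?_, ?_, ?_⟩
    · intro N hN
      rcases Nat.even_or_odd' N with ⟨M, hM | hM⟩
      · have hMlt : M < 5 * 2 ^ n := by omega
        have hg := ihg M hMlt
        subst hM
        rw [tm_even, S_even]
        by_cases hs : S (q ^ 2) M ≤ 0
        · rw [if_pos hs] at hg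
          rw [if_pos (mul_nonpos_iff.2 (Or.inl ⟨h1qpos.le, hs⟩))]
          exact hg
        · rw [if_neg hs] at hg
          push_neg at hs
          rw [if_neg (by push_neg; exact mul_pos h1qpos hs)]
          exact hg
      · have hMlt : M < 5 * 2 ^ n := by omega
        obtain ⟨hi1, hi2⟩ := ihi M hMlt
        rw [hpowM M] at hi1 hi2
        have ht : (0:ℝ) < q ^ (2 * M) := by positivity
        subst hM
        rw [tm_odd, S_odd]
        rcases hsign M hMlt with ⟨htm, hs⟩ | ⟨htm, hs⟩
        · have hcond : ¬ ((1 - q) * S (q ^ 2) M + (tm M : ℝ) * q ^ (2 * M) ≤ 0) := by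
            push_neg
            rw [htm]
            push_cast
            nlinarith [mul_nonneg (show (0:ℝ) ≤ q - q ^ 2 by nlinarith) (neg_nonneg.2 hs)]
          rw [if_neg hcond, htm]
        · have hcond : (1 - q) * S (q ^ 2) M + (tm M : ℝ) * q ^ (2 * M) ≤ 0 := by
            rw [htm]
            push_cast
            nlinarith [mul_nonneg (show (0:ℝ) ≤ q - q ^ 2 by nlinarith) hs.le]
          rw [if_pos hcond, htm]
          norm_num
    · intro N hN
      rcases Nat.even_or_odd' N with ⟨M, hM | hM⟩
      · have hMlt : M < 5 * 2 ^ n := by omega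
        obtain ⟨hi1, hi2⟩ := ihi M hMlt
        rw [hpowM M] at hi1 hi2
        have ht : (0:ℝ) < q ^ (2 * M) := by positivity
        subst hM
        rw [S_even]
        rcases le_or_gt 0 (S (q ^ 2) M) with hs | hs
        · constructor
          · nlinarith [mul_nonneg (mul_nonneg h1qpos.le h1qpos.le) hs]
          · nlinarith [mul_nonneg (mul_nonneg hq0.le h1qpos.le) hs]
        · constructor
          · nlinarith [mul_nonneg (mul_nonneg hq0.le h1qpos.le) (neg_nonneg.2 hs.le)]
          · nlinarith [mul_nonneg (mul_nonneg h1qpos.le h1qpos.le) (neg_nonneg.2 hs.le)]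
      · have hMlt : M < 5 * 2 ^ n := by omega
        obtain ⟨hi1, hi2⟩ := ihi M hMlt
        rw [hpowM M] at hi1 hi2
        have ht : (0:ℝ) < q ^ (2 * M) := by positivity
        subst hM
        rw [S_odd]
        have hpe : q ^ (2 * M + 1) = q * q ^ (2 * M) := by rw [pow_succ]; ring
        rw [hpe]
        rcases hsign M hMlt with ⟨htm, hs⟩ | ⟨htm, hs⟩ <;> rw [htm] <;> push_cast
        · constructor
          · nlinarith [mul_nonneg (mul_nonneg hq0.le h1qpos.le) (neg_nonneg.2 hs),
              mul_pos ht (show (0:ℝ) < 2 * q - 1 by linarith)]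
          · nlinarith [mul_nonneg (mul_nonneg (sub_nonneg.2 hq1.le) (sub_nonneg.2 hq1.le))
              (neg_nonneg.2 hs), mul_pos ht (show (0:ℝ) < 2 * q - 1 by linarith)]
        · constructor
          · nlinarith [mul_nonneg (mul_nonneg h1qpos.le h1qpos.le) hs.le,
              mul_pos ht (show (0:ℝ) < 2 * q - 1 by linarith)]
          · nlinarith [mul_nonneg (mul_nonneg hq0.le h1qpos.le) hs.le,
              mul_pos ht (show (0:ℝ) < 2 * q - 1 by linarith)]
    · rw [h2n, S_even]
      exact mul_pos h1qpos ihp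

lemma rpow_pow_cancel (n : ℕ) (x : ℝ) (hx : 0 ≤ x) :
    (x ^ ((2:ℝ) ^ (-(n:ℤ)))) ^ (2 ^ n : ℕ) = x := by
  rw [← Real.rpow_natCast (x ^ ((2:ℝ) ^ (-(n:ℤ)))) (2 ^ n), ← Real.rpow_mul hx]
  rw [show ((2:ℝ) ^ (-(n:ℤ))) * ((2 ^ n : ℕ) : ℝ) = 1 by
    push_cast
    rw [zpow_neg, zpow_natCast]
    field_simp]
  exact Real.rpow_one x

theorem main_greedy_five (β : ℝ) (hβ0 : 0 < β) (hβ1 : β < 1)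
    (hβ : 1 - β - β ^ 2 + β ^ 3 - β ^ 4 = 0)
    (n : ℕ) (q : ℝ)
    (hq0 : ((Real.sqrt 5 - 1) / 2) ^ ((2 : ℝ) ^ (-(n : ℤ))) < q)
    (hq1 : q < β ^ ((2 : ℝ) ^ (-(n : ℤ)))) :
    (∀ N < 5 * 2 ^ n, a q N = tm N) ∧ a q (5 * 2 ^ n) ≠ tm (5 * 2 ^ n) := by
  obtain ⟨h5, h5a, h5b⟩ := sqrt5_lemmas
  have hα0 : (0:ℝ) < (Real.sqrt 5 - 1) / 2 := by linarith
  have hq : 0 < q := lt_trans (Real.rpow_pos_of_pos hα0 _) hq0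
  have ha1 : (Real.sqrt 5 - 1) / 2 < q ^ (2 ^ n) := by
    rw [← rpow_pow_cancel n _ hα0.le]
    exact pow_lt_pow_left₀ hq0 (Real.rpow_nonneg hα0.le _) (by positivity)
  have hb1 : q ^ (2 ^ n) < β := by
    rw [← rpow_pow_cancel n β hβ0.le]
    exact pow_lt_pow_left₀ hq1 hq.le (by positivity)
  have hq1' : q < 1 := by
    by_contra h
    push_neg at h
    have h1 : (1:ℝ) ≤ q ^ (2 ^ n) := by
      calc (1:ℝ) = 1 ^ (2 ^ n) := (one_pow _).symm
      _ ≤ q ^ (2 ^ n) := pow_le_pow_left₀ (by norm_num) h _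
    linarith
  obtain ⟨hgood, _, hpos⟩ := grand β hβ0 hβ1 hβ n q hq hq1' ha1 hb1
  have hagree := a_agree q (5 * 2 ^ n) hgood
  refine ⟨hagree, ?_⟩
  have hA : a q (5 * 2 ^ n) = if S q (5 * 2 ^ n) ≤ 0 then 1 else -1 :=
    a_eq_ite q _ fun j hj => hagree j hj
  rw [hA, if_neg (not_le.2 hpos), tm_five_pow]
  norm_num
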